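/- Let K ⊆ ℝ^d_+ be nonempty with ‖x‖ ≤ R for all x ∈ K, let α ≥ 1, R > 0, and let O : ℝ^d_+ → K satisfy O(c)·c ≤ α·inf_{x∈K} x·c for every c ∈ ℝ^d_+. Fix c ∈ ℝ^d and set s = O(c⁺) and v = O(c⁺) − αR·c̄⁻. Then: (1) v·c ≤ α·inf_{x∈K} x·c; (2) s ≤ v coordinatewise, and hence s·f ≤ v·f for every f ∈ ℝ^d_+; (3) ‖v‖ ≤ (α+2)R. -/

import Mathlib

open scoped RealInnerProductSpace

/-- The extended approximation oracle for loss minimization (α ≥ 1):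
given an α-approximation oracle `O` for linear minimization over `K ⊆ ℝ^d_+`,
the point `v = O(c⁺) − αR·c̄⁻` satisfies the three stated properties. -/
theorem extended_approximation_oracle_min {d : ℕ}
    (K : Set (EuclideanSpace ℝ (Fin d))) (R α : ℝ)
    (hK : K.Nonempty) (hKpos : ∀ x ∈ K, ∀ i, 0 ≤ x i)
    (hKR : ∀ x ∈ K, ‖x‖ ≤ R) (hα : 1 ≤ α) (hR : 0 < R)
    (O : EuclideanSpace ℝ (Fin d) → EuclideanSpace ℝ (Fin d))
    (hOmem : ∀ c : EuclideanSpace ℝ (Fin d), (∀ i, 0 ≤ c i) → O c ∈ K)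
    (hOapx : ∀ c : EuclideanSpace ℝ (Fin d), (∀ i, 0 ≤ c i) →
      ⟪O c, c⟫ ≤ α * ⨅ x : K, ⟪(x : EuclideanSpace ℝ (Fin d)), c⟫)
    (c cpos cneg : EuclideanSpace ℝ (Fin d))
    (hcpos : ∀ i, cpos i = max (c i) 0)
    (hcneg : ∀ i, cneg i = min (c i) 0)
    (s v : EuclideanSpace ℝ (Fin d))
    (hs : s = O cpos)
    (hv : v = O cpos - (α * R) • (‖cneg‖⁻¹ • cneg)) :
    ⟪v, c⟫ ≤ α * ⨅ x : K, ⟪(x : EuclideanSpace ℝ (Fin d)), c⟫ ∧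
    (∀ i, s i ≤ v i) ∧
    (∀ f : EuclideanSpace ℝ (Fin d), (∀ i, 0 ≤ f i) → ⟪s, f⟫ ≤ ⟪v, f⟫) ∧
    ‖v‖ ≤ (α + 2) * R := by
  haveI : Nonempty K := hK.to_subtype
  have hα0 : (0:ℝ) < α := lt_of_lt_of_le one_pos hα
  have hinner : ∀ x y : EuclideanSpace ℝ (Fin d), ⟪x, y⟫ = ∑ i, x i * y i := by
    intro x y
    simp [PiLp.inner_apply, RCLike.inner_apply, mul_comm]
  have hcp0 : ∀ i, 0 ≤ cpos i := fun i => by rw [hcpos]; exact le_max_right _ _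
  have hcn0 : ∀ i, cneg i ≤ 0 := fun i => by rw [hcneg]; exact min_le_right _ _
  have hsK : O cpos ∈ K := hOmem cpos hcp0
  have hs0 : ∀ i, 0 ≤ O cpos i := hKpos _ hsK
  have hsR : ‖O cpos‖ ≤ R := hKR _ hsK
  have hc : c = cpos + cneg := by
    ext i
    rw [PiLp.add_apply, hcpos, hcneg, max_add_min, add_zero]
  have horth : ∀ i, cneg i * cpos i = 0 := by
    intro i
    rw [hcpos, hcneg]
    rcases le_total (c i) 0 with h | h
    · simp [max_eq_right h]
    · simp [min_eq_right h]
  have hnegc : ⟪cneg, c⟫ = ‖cneg‖ ^ 2 := by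
    rw [← real_inner_self_eq_norm_sq, hinner, hinner]
    refine Finset.sum_congr rfl fun i _ => ?_
    rw [hc, PiLp.add_apply, mul_add, horth i, zero_add]
  have hinvsq : ‖cneg‖⁻¹ * ‖cneg‖ ^ 2 = ‖cneg‖ := by
    rcases eq_or_ne ‖cneg‖ 0 with h | h
    · simp [h]
    · field_simp
  -- coordinatewise s ≤ v
  have hsv : ∀ i, s i ≤ v i := by
    intro i
    have h1 : cneg i ≤ 0 := hcn0 i
    have h2 : (0:ℝ) ≤ ‖cneg‖⁻¹ := inv_nonneg.mpr (norm_nonneg _)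
    have h3 : (0:ℝ) ≤ α * R := by positivity
    simp only [hv, hs, PiLp.sub_apply, PiLp.smul_apply, smul_eq_mul]
    nlinarith [mul_nonneg h3 (mul_nonneg h2 (neg_nonneg.mpr h1))]
  refine ⟨?_, hsv, ?_, ?_⟩
  · -- part 1
    have hvc : ⟪v, c⟫ = ⟪O cpos, cpos⟫ + ⟪O cpos, cneg⟫ - α * R * ‖cneg‖ := by
      rw [hv, inner_sub_left, real_inner_smul_left, real_inner_smul_left, hnegc, hinvsq]
      rw [show ⟪O cpos, c⟫ = ⟪O cpos, cpos⟫ + ⟪O cpos, cneg⟫ by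
        rw [hc, inner_add_right]]
    have hsneg : ⟪O cpos, cneg⟫ ≤ 0 := by
      rw [hinner]
      exact Finset.sum_nonpos fun i _ => mul_nonpos_of_nonneg_of_nonpos (hs0 i) (hcn0 i)
    have hxcp : ∀ y : K, (0:ℝ) ≤ ⟪(y : EuclideanSpace ℝ (Fin d)), cpos⟫ := by
      intro y
      rw [hinner]
      exact Finset.sum_nonneg fun i _ => mul_nonneg (hKpos _ y.2 i) (hcp0 i)
    have hbdd : BddBelow (Set.range fun y : K => ⟪(y : EuclideanSpace ℝ (Fin d)), cpos⟫) := by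
      refine ⟨0, ?_⟩
      rintro _ ⟨y, rfl⟩
      exact hxcp y
    have key : ∀ x : K, ⟪v, c⟫ / α ≤ ⟪(x : EuclideanSpace ℝ (Fin d)), c⟫ := by
      intro x
      rw [div_le_iff₀' hα0]
      have b1 : ⟪O cpos, cpos⟫ ≤ α * ⟪(x : EuclideanSpace ℝ (Fin d)), cpos⟫ := by
        refine le_trans (hOapx cpos hcp0) ?_
        exact mul_le_mul_of_nonneg_left (ciInf_le hbdd x) hα0.le
      have b3 : -(R * ‖cneg‖) ≤ ⟪(x : EuclideanSpace ℝ (Fin d)), cneg⟫ := by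
        have habs : |⟪(x : EuclideanSpace ℝ (Fin d)), cneg⟫| ≤ R * ‖cneg‖ := by
          refine le_trans (abs_real_inner_le_norm _ _) ?_
          exact mul_le_mul_of_nonneg_right (hKR _ x.2) (norm_nonneg _)
        linarith [neg_abs_le ⟪(x : EuclideanSpace ℝ (Fin d)), cneg⟫]
      have b3' : α * (-(R * ‖cneg‖)) ≤ α * ⟪(x : EuclideanSpace ℝ (Fin d)), cneg⟫ :=
        mul_le_mul_of_nonneg_left b3 hα0.le
      have hxc : α * ⟪(x : EuclideanSpace ℝ (Fin d)), c⟫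
          = α * ⟪(x : EuclideanSpace ℝ (Fin d)), cpos⟫
            + α * ⟪(x : EuclideanSpace ℝ (Fin d)), cneg⟫ := by
        rw [hc, inner_add_right, mul_add]
      rw [hvc, hxc]
      nlinarith
    have := le_ciInf key
    calc ⟪v, c⟫ = α * (⟪v, c⟫ / α) := by field_simp
    _ ≤ α * ⨅ x : K, ⟪(x : EuclideanSpace ℝ (Fin d)), c⟫ :=
        mul_le_mul_of_nonneg_left this hα0.le
  · -- part 3
    intro f hf
    rw [hinner, hinner]
    exact Finset.sum_le_sum fun i _ => mul_le_mul_of_nonneg_right (hsv i) (hf i)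
  · -- part 4
    have h1 : ‖v‖ ≤ ‖O cpos‖ + ‖(α * R) • (‖cneg‖⁻¹ • cneg)‖ := by
      rw [hv]; exact norm_sub_le _ _
    have h2 : ‖(α * R) • (‖cneg‖⁻¹ • cneg)‖ ≤ α * R := by
      rw [norm_smul, norm_smul, norm_inv, norm_norm]
      have hle : ‖cneg‖⁻¹ * ‖cneg‖ ≤ 1 := by
        rcases eq_or_ne ‖cneg‖ 0 with h | h
        · simp [h]
        · rw [inv_mul_cancel₀ h]
      have : |α * R| = α * R := abs_of_nonneg (by positivity)
      rw [Real.norm_eq_abs, this]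
      nlinarith [mul_le_mul_of_nonneg_left hle (by positivity : (0:ℝ) ≤ α * R)]
    nlinarith
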